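/- Let O be a graded non-symmetric k-linear operad and I ⊂ O an associative operadic ideal. Then: (1) the circle product x∘y := x{y} on the ideal complex C(I) is associative, i.e., (x∘y)∘z = x∘(y∘z) for all x,y,z ∈ C(I); (2) C(I) with the circle product is a (non-unital) graded associative algebra, and the Gerstenhaber Lie bracket restricted to C(I) is the commutator of the circle product; (3) for all a ∈ C(O) and x,y ∈ C(I), the Gerstenhaber relation [a, x∘y] = [a,x]∘y + (−1)^{(|a|−1)|x|} x∘[a,y] holds, where |a| denotes total degree in C(O) and |x|,|y| total degrees in C(I). -/
import Mathlib


/-!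
Brace algebras and associative operadic ideals (Lemma `brace_associative`).

A graded non-symmetric `k`-linear operad `O` is presented here through its
operad complex `C(O)`: the underlying `k`-vector space `V` of `C(O)` graded by
total degree (the total degree of `x ∈ C^{p,q}(O) = O(p)^{p+q-1}` is `p + q`),
together with the unary brace `x{y}` and binary brace `x{y,z}` operations
induced by the infinitesimal compositions, and an operadic ideal `I ⊆ O`
presented through its ideal complex `C(I) ⊆ C(O)` (recall that
`C^{p,q}(I) = I(p+1)^{p+q} ⊆ C^{p+1,q}(O)`, so the total degree of an element of
`C(I)` equals its total degree in `C(O)` minus one).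
-/

universe u v

structure BraceIdealContext (k : Type u) [Field k] where
  /-- the underlying space of the operad complex `C(O)` -/
  V : Type v
  [addCommGroup : AddCommGroup V]
  [module : Module k V]
  /-- `grading n` is the subspace of elements of total degree `n` in `C(O)` -/
  grading : ℤ → Submodule k V
  /-- the ideal complex `C(I)` as a subspace of `C(O)`; an element of
  `C(O)`-total degree `n` lying in the ideal has total degree `n - 1` in `C(I)` -/
  ideal : Submodule k V
  /-- the unary brace operation `x{y}` -/
  brace₁ : V →ₗ[k] V →ₗ[k] V
  /-- the binary brace operation `x{y,z}` -/
  brace₂ : V →ₗ[k] V →ₗ[k] V →ₗ[k] V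
  brace₁_mem : ∀ {a b : ℤ} {x y : V}, x ∈ grading a → y ∈ grading b →
      brace₁ x y ∈ grading (a + b - 1)
  brace₂_mem : ∀ {a b c : ℤ} {x y z : V}, x ∈ grading a → y ∈ grading b →
      z ∈ grading c → brace₂ x y z ∈ grading (a + b + c - 2)
  /-- the brace ideal property -/
  brace₁_ideal_left : ∀ {x y : V}, x ∈ ideal → brace₁ x y ∈ ideal
  /-- the brace ideal property -/
  brace₁_ideal_right : ∀ {x y : V}, y ∈ ideal → brace₁ x y ∈ ideal
  /-- the instance
  `x{y}{z} = x{y,z} + x{y{z}} + (-1)^{(|y|-1)(|z|-1)} x{z,y}`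
  of the brace relation -/
  brace_rel : ∀ {b c : ℤ} (x : V) {y z : V}, y ∈ grading b → z ∈ grading c →
      brace₁ (brace₁ x y) z =
        brace₂ x y z + brace₁ x (brace₁ y z) +
          (Int.negOnePow ((b - 1) * (c - 1)) : ℤ) • brace₂ x z y

attribute [instance] BraceIdealContext.addCommGroup BraceIdealContext.module

namespace BraceIdealContext

variable {k : Type u} [Field k] (C : BraceIdealContext k)

/-- the circle product `x ∘ y := x{y}` on the ideal complex `C(I)` -/
def circle (x y : C.V) : C.V := C.brace₁ x y

/-- the Gerstenhaber Lie bracket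
`[x,y] = x{y} - (-1)^{(|x|-1)(|y|-1)} y{x}` of elements of total degrees
`a` and `b` in `C(O)` -/
def bracket (a b : ℤ) (x y : C.V) : C.V :=
  C.brace₁ x y - (Int.negOnePow ((a - 1) * (b - 1)) : ℤ) • C.brace₁ y x

end BraceIdealContext

/-- **Associative operadic ideals and circle products**
(Lemma `brace_associative`): let `O` be a graded operad and `I ⊆ O` an
associative operadic ideal, i.e. `x{y,z} = 0` whenever `y, z ∈ C(I)`.  Then:
(1) the circle product `x ∘ y := x{y}` on the ideal complex `C(I)` is
associative; (2) `C(I)` is closed under the circle product, making it a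
(non-unital) graded associative algebra, and the Gerstenhaber Lie bracket
restricted to `C(I)` is the commutator of the circle product with respect to the
total degree of `C(I)` (the shifted total degree of `C(O)`); (3) for
`a ∈ C(O)` and `x, y ∈ C(I)` the Gerstenhaber relation
`[a, x∘y] = [a,x]∘y + (-1)^{(|a|-1)|x|} x∘[a,y]` holds, where `|x|` is the total
degree of `x` in `C(I)`. -/
theorem brace_associative {k : Type u} [Field k] (C : BraceIdealContext.{u, v} k)
    (hassoc : ∀ (x y z : C.V), y ∈ C.ideal → z ∈ C.ideal → C.brace₂ x y z = 0) :
    -- (1) associativity of the circle product on `C(I)`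
    (∀ (x y z : C.V), x ∈ C.ideal → y ∈ C.ideal → z ∈ C.ideal →
        (∀ a b c : ℤ, x ∈ C.grading a → y ∈ C.grading b → z ∈ C.grading c →
          C.circle (C.circle x y) z = C.circle x (C.circle y z))) ∧
    -- (2) `C(I)` is closed under the circle product, and the Gerstenhaber Lie
    -- bracket on `C(I)` is the commutator of the circle product
    (∀ (x y : C.V), x ∈ C.ideal → y ∈ C.ideal → C.circle x y ∈ C.ideal) ∧
    (∀ (x y : C.V), x ∈ C.ideal → y ∈ C.ideal →
        ∀ a b : ℤ, x ∈ C.grading a → y ∈ C.grading b →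
          C.bracket a b x y =
            C.circle x y -
              (Int.negOnePow ((a - 1) * (b - 1)) : ℤ) • C.circle y x) ∧
    -- (3) the Gerstenhaber relation
    (∀ (a x y : C.V), x ∈ C.ideal → y ∈ C.ideal →
        ∀ α β γ : ℤ, a ∈ C.grading α → x ∈ C.grading β → y ∈ C.grading γ →
          C.bracket α (β + γ - 1) a (C.circle x y) =
            C.circle (C.bracket α β a x) y +
              (Int.negOnePow ((α - 1) * (β - 1)) : ℤ) •
                C.circle x (C.bracket α γ a y)) := by
  classical
  refine ⟨?_, ?_, ?_, ?_⟩
  · intro x y z hx hy hz a b c ha hb hc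
    simp only [BraceIdealContext.circle]
    rw [C.brace_rel x hb hc, hassoc _ _ _ hy hz, hassoc _ _ _ hz hy]
    simp
  · intro x y hx hy
    exact C.brace₁_ideal_left hx
  · intro x y hx hy a b ha hb
    rfl
  · intro a x y hx hy α β γ ha hxg hyg
    simp only [BraceIdealContext.bracket, BraceIdealContext.circle]
    rw [map_sub, map_zsmul, LinearMap.sub_apply, LinearMap.smul_apply,
      C.brace_rel a hxg hyg, C.brace_rel x ha hyg, C.brace_rel x hyg ha,
      hassoc _ _ _ hx hy, hassoc _ _ _ hy hx]
    set e1 : ℤ := (Int.negOnePow ((α - 1) * (β - 1)) : ℤ) with he1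
    set e2 : ℤ := (Int.negOnePow ((α - 1) * (γ - 1)) : ℤ) with he2
    have hmu : (Int.negOnePow ((α - 1) * (β + γ - 1 - 1)) : ℤ) = e1 * e2 := by
      rw [show (α - 1) * (β + γ - 1 - 1) = (α - 1) * (β - 1) + (α - 1) * (γ - 1) by ring,
        Int.negOnePow_add]
      push_cast
      ring
    have h22 : e2 * e2 = 1 := by
      rw [he2, ← Units.val_mul, ← Int.negOnePow_add,
        Int.negOnePow_even _ (Even.add_self _), Units.val_one]
    have hcomm : (Int.negOnePow ((γ - 1) * (α - 1)) : ℤ) = e2 := by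
      rw [he2, mul_comm]
    rw [hmu, hcomm]
    have key : (e1 * e2) • (e2 • C.brace₂ x a y) = e1 • C.brace₂ x a y := by
      rw [smul_smul, mul_assoc, h22, mul_one]
    rw [smul_add, smul_add, key]
    simp only [map_sub, map_zsmul, smul_zero, add_zero, zero_add, smul_sub, smul_add, smul_smul]
    module
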